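/- Let r ≥ 1, n ≥ 1, let λ_1,…,λ_{rn} be real numbers, and let X be an r×(rn) random matrix whose entries are independent standard real Gaussian random variables N(0,1) (i.e., the law of X is the product over all entries of the standard Gaussian measure on ℝ). Then E[ (det M(λ,X))² ] = Σ_{(A_1,…,A_r) ∈ 𝒫_{r,n}} ∏_{j=1}^r Δ(A_j)². -/

import Mathlib

open scoped BigOperators
open MeasureTheory ProbabilityTheory

/-- `M(λ,X)`: the `(rn)×(rn)` matrix with `(i,j)` entry
`λ_i^{⌊(j−1)/r⌋} · X_{j − r⌊(j−1)/r⌋, i}` (written 0-based). -/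
def MagicM (r n : ℕ) (hr : 0 < r) (lam : Fin (r * n) → ℝ)
    (X : Matrix (Fin r) (Fin (r * n)) ℝ) : Matrix (Fin (r * n)) (Fin (r * n)) ℝ :=
  Matrix.of fun i j => lam i ^ (j.val / r) * X ⟨j.val % r, Nat.mod_lt _ hr⟩ i

/-- `Δ(A)`: the Vandermonde product `∏_{i,j ∈ A, i<j} (λ_j − λ_i)`. -/
def vdm {N : ℕ} (lam : Fin N → ℝ) (A : Finset (Fin N)) : ℝ :=
  ∏ p ∈ (A ×ˢ A).filter fun p => p.1 < p.2, (lam p.2 - lam p.1)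

/-- `𝒫_{r,n}`: ordered `r`-tuples of pairwise disjoint `n`-element subsets of
`{1,…,rn}` whose union is everything. -/
def parts (r n : ℕ) : Finset (Fin r → Finset (Fin (r * n))) :=
  Finset.univ.filter fun A =>
    (∀ m, (A m).card = n) ∧ (∀ m m', m ≠ m' → Disjoint (A m) (A m')) ∧
      Finset.univ.biUnion A = Finset.univ

/-! ### Auxiliary material -/

section PiIntegral

open Real
open scoped ENNReal NNReal

theorem my_integral_pi {m : ℕ} {E : Type*} [MeasurableSpace E] (μ : Measure E) [SigmaFinite μ]
    (f : Fin m → E → ℝ) :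
    ∫ x : Fin m → E, ∏ i, f i (x i) ∂Measure.pi (fun _ => μ) = ∏ i, ∫ x, f i x ∂μ := by
  induction m with
  | zero => simp [Measure.real, Measure.pi_univ]
  | succ m ih =>
    calc ∫ x : Fin (m+1) → E, ∏ i, f i (x i) ∂Measure.pi (fun _ => μ)
        = ∫ p : E × (Fin m → E), f 0 p.1 * ∏ i : Fin m, f i.succ (p.2 i)
            ∂(μ.prod (Measure.pi fun _ => μ)) := by
          rw [← ((measurePreserving_piFinSuccAbove (fun _ : Fin (m+1) => μ) 0).symm).integral_comp']
          congr 1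
          ext p
          rw [Fin.prod_univ_succ]
          simp [MeasurableEquiv.piFinSuccAbove_symm_apply, Fin.insertNthEquiv,
            Fin.insertNth_zero, Fin.zero_succAbove]
      _ = (∫ x, f 0 x ∂μ) * ∏ i : Fin m, ∫ x, f i.succ x ∂μ := by
          rw [← ih fun i => f i.succ]
          exact integral_prod_mul (μ := μ) (ν := Measure.pi fun _ => μ) (f 0)
            (fun y => ∏ i : Fin m, f i.succ (y i))
      _ = ∏ i, ∫ x, f i x ∂μ := by rw [Fin.prod_univ_succ]

theorem my_integrable_pi {m : ℕ} {E : Type*} [MeasurableSpace E] (μ : Measure E) [SigmaFinite μ]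
    (f : Fin m → E → ℝ) (hf : ∀ i, Integrable (f i) μ) :
    Integrable (fun x : Fin m → E => ∏ i, f i (x i)) (Measure.pi fun _ => μ) := by
  induction m with
  | zero =>
    have hfin : IsFiniteMeasure (Measure.pi fun _ : Fin 0 => μ) := by
      constructor; rw [Measure.pi_univ]; simp
    simp only [Finset.univ_eq_empty, Finset.prod_empty]
    exact integrable_const _
  | succ m ih =>
    have h2 : Integrable (fun p : E × (Fin m → E) => f 0 p.1 * ∏ i : Fin m, f i.succ (p.2 i))
        (μ.prod (Measure.pi fun _ => μ)) :=
      Integrable.mul_prod (hf 0) (ih (fun i => f i.succ) (fun i => hf i.succ))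
    have h3 := (((measurePreserving_piFinSuccAbove (fun _ : Fin (m+1) => μ) 0)).integrable_comp_emb
      (MeasurableEquiv.measurableEmbedding _)).mpr h2
    convert h3 using 1
    ext x
    simp only [Function.comp]
    rw [Fin.prod_univ_succ]
    simp [MeasurableEquiv.piFinSuccAbove_apply, Fin.zero_succAbove, Fin.tail]

end PiIntegral

section Gauss

open Real
open scoped ENNReal NNReal

lemma gauss_integral_eq (f : ℝ → ℝ) :
    ∫ x, f x ∂gaussianReal 0 1 = ∫ x, gaussianPDFReal 0 1 x * f x := by
  rw [gaussianReal_of_var_ne_zero 0 one_ne_zero]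
  have : (gaussianPDF 0 1) = fun x => ((gaussianPDFReal 0 1 x).toNNReal : ℝ≥0∞) := by
    ext x; rw [gaussianPDF, ENNReal.ofReal]
  rw [this, integral_withDensity_eq_integral_smul
    ((measurable_gaussianPDFReal 0 1).real_toNNReal) f]
  congr 1; ext x
  rw [NNReal.smul_def, smul_eq_mul, Real.coe_toNNReal _ (gaussianPDFReal_nonneg 0 1 x)]

lemma gauss_pdf_eq (x : ℝ) : gaussianPDFReal 0 1 x = (√(2 * π))⁻¹ * rexp (-(x ^ 2) / 2) := by
  simp [gaussianPDFReal]

lemma integrable_npow_gaussweight (k : ℕ) :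
    Integrable (fun x : ℝ => x ^ k * rexp (-(1/2) * x ^ 2)) := by
  have h := integrable_rpow_mul_exp_neg_mul_sq (b := 1/2) (by norm_num) (s := (k : ℝ))
    (lt_of_lt_of_le neg_one_lt_zero (Nat.cast_nonneg k))
  simpa [Real.rpow_natCast] using h

lemma gauss_integrable_npow (k : ℕ) :
    Integrable (fun x : ℝ => x ^ k) (gaussianReal 0 1) := by
  rw [gaussianReal_of_var_ne_zero 0 one_ne_zero]
  have : (gaussianPDF 0 1) = fun x => ((gaussianPDFReal 0 1 x).toNNReal : ℝ≥0∞) := by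
    ext x; rw [gaussianPDF, ENNReal.ofReal]
  rw [this, integrable_withDensity_iff_integrable_smul
    ((measurable_gaussianPDFReal 0 1).real_toNNReal)]
  apply Integrable.congr (((integrable_npow_gaussweight k).const_mul ((√(2 * π))⁻¹)))
  filter_upwards with x
  rw [NNReal.smul_def, smul_eq_mul, Real.coe_toNNReal _ (gaussianPDFReal_nonneg 0 1 x),
    gauss_pdf_eq]
  ring_nf

lemma J1_zero : ∫ x : ℝ, x * rexp (-(1/2) * x ^ 2) = 0 := by
  set g : ℝ → ℝ := fun x => x * rexp (-(1/2) * x ^ 2) with hg_def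
  have hg : Integrable g := integrable_mul_exp_neg_mul_sq (by norm_num)
  have hsplit := integral_add_compl (measurableSet_Iic (a := (0:ℝ))) hg
  rw [Set.compl_Iic] at hsplit
  have hodd : ∀ x, g (-x) = - g x := by
    intro x; simp only [hg_def]; rw [neg_sq]; ring
  have h1 : ∫ x in Set.Iic (0:ℝ), g x = - ∫ x in Set.Ioi (0:ℝ), g x := by
    have := integral_comp_neg_Iic (0:ℝ) g
    rw [neg_zero] at this
    rw [← this]
    simp_rw [hodd]
    rw [integral_neg]
    simp [this]
  rw [h1] at hsplit
  linarith [hsplit]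

lemma J2_val : ∫ x : ℝ, x ^ 2 * rexp (-(1/2) * x ^ 2) = √(2 * π) := by
  have habs : ∀ x : ℝ, |x| ^ 2 * rexp (-(1/2) * |x| ^ 2) = x ^ 2 * rexp (-(1/2) * x ^ 2) := by
    intro x; rw [sq_abs]
  have h := integral_comp_abs (f := fun t => t ^ 2 * rexp (-(1/2) * t ^ 2))
  simp_rw [habs] at h
  rw [h]
  have hIoi : ∫ x in Set.Ioi (0:ℝ), x ^ 2 * rexp (-(1/2) * x ^ 2)
      = ((1:ℝ)/2) ^ (-((2:ℝ)+1)/2) * (1/2) * Real.Gamma (((2:ℝ)+1)/2) := by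
    have := integral_rpow_mul_exp_neg_mul_rpow (p := 2) (q := 2) (b := 1/2)
      (by norm_num) (by norm_num) (by norm_num)
    rw [← this]
    refine setIntegral_congr_fun measurableSet_Ioi (fun x hx => ?_)
    rw [show ((2:ℝ)) = ((2:ℕ):ℝ) by norm_num, Real.rpow_natCast]
  rw [hIoi]
  have hgamma : Real.Gamma (((2:ℝ)+1)/2) = √π / 2 := by
    have h32 : ((2:ℝ)+1)/2 = 1/2 + 1 := by norm_num
    rw [h32, Real.Gamma_add_one (by norm_num), Real.Gamma_one_half_eq]; ring
  rw [hgamma]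
  have hrpow : ((1:ℝ)/2) ^ (-((2:ℝ)+1)/2) = 2 * √2 := by
    have h1 : ((1:ℝ)/2) = (2:ℝ) ^ (-1:ℝ) := by rw [Real.rpow_neg_one]; norm_num
    rw [h1, ← Real.rpow_mul (by norm_num : (0:ℝ) ≤ 2)]
    rw [show (-1:ℝ) * (-((2:ℝ)+1)/2) = 1 + 1/2 by norm_num]
    rw [Real.rpow_add (by norm_num : (0:ℝ) < 2), Real.rpow_one, ← Real.sqrt_eq_rpow]
  rw [hrpow, Real.sqrt_mul (by norm_num : (0:ℝ) ≤ 2)]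
  ring

lemma gauss_moment_eq (k : ℕ) :
    ∫ x, x ^ k ∂gaussianReal 0 1 = (√(2*π))⁻¹ * ∫ x : ℝ, x ^ k * rexp (-(1/2) * x ^ 2) := by
  rw [gauss_integral_eq fun x => x ^ k, ← integral_const_mul]
  congr 1; ext x
  rw [gauss_pdf_eq, show -(x^2)/2 = -(1/2) * x^2 by ring]
  ring

lemma gauss_moment_zero : ∫ x, x ^ 0 ∂gaussianReal 0 1 = 1 := by simp

lemma gauss_moment_one : ∫ x, x ^ 1 ∂gaussianReal 0 1 = 0 := by
  rw [gauss_moment_eq]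
  simp_rw [pow_one]
  rw [J1_zero, mul_zero]

lemma gauss_moment_two : ∫ x, x ^ 2 ∂gaussianReal 0 1 = 1 := by
  rw [gauss_moment_eq, J2_val]
  rw [inv_mul_cancel₀ (ne_of_gt (Real.sqrt_pos.mpr (by positivity)))]

/-- The key moment computation: with indicator exponents, the integral is `1` if the
indicators agree and `0` if they disagree. -/
lemma gauss_moment_ind (p q : Prop) [Decidable p] [Decidable q] :
    ∫ x, x ^ ((if p then 1 else 0) + (if q then 1 else 0)) ∂gaussianReal 0 1
      = if (p ↔ q) then (1:ℝ) else 0 := by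
  have h1 : ∫ x : ℝ, x ∂gaussianReal 0 1 = 0 := by
    have := gauss_moment_one; simpa using this
  by_cases hp : p <;> by_cases hq : q <;>
    simp [hp, hq, gauss_moment_zero, h1, gauss_moment_two]

end Gauss

section Comb

open Finset

variable (r n : ℕ) (hr : 0 < r) (lam : Fin (r * n) → ℝ)

/-- The residue class of a column index. -/
def cIdx (i : Fin (r * n)) : Fin r := ⟨i.val % r, Nat.mod_lt _ hr⟩

/-- The weight of a permutation in the determinant expansion. -/
def wt (σ : Equiv.Perm (Fin (r * n))) : ℝ :=
  ((Equiv.Perm.sign σ : ℤ) : ℝ) * ∏ i, lam (σ i) ^ (i.val / r)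

/-- The Gaussian monomial attached to a permutation. -/
def mon (σ : Equiv.Perm (Fin (r * n))) (X : Fin r → Fin (r * n) → ℝ) : ℝ :=
  ∏ i, X (cIdx r n hr i) (σ i)

/-- The partition induced by a permutation. -/
def Phi (σ : Equiv.Perm (Fin (r * n))) : Fin r → Finset (Fin (r * n)) :=
  fun a => (Finset.univ.filter fun i => cIdx r n hr i = a).image σ

/-- The block matrix whose determinant is the fiber sum of weights. -/
def CA (A : Fin r → Finset (Fin (r * n))) : Matrix (Fin (r * n)) (Fin (r * n)) ℝ :=
  Matrix.of fun k i => if k ∈ A (cIdx r n hr i) then lam k ^ (i.val / r) else 0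

/-- Equivalence sending `(k, a)` to the column `a + r * k`. -/
def colEquiv : Fin n × Fin r ≃ Fin (r * n) :=
  finProdFinEquiv.trans (finCongr (Nat.mul_comm n r))

lemma colEquiv_val (p : Fin n × Fin r) : (colEquiv r n p).val = p.2.val + r * p.1.val := by
  simp [colEquiv, finProdFinEquiv]

lemma cIdx_colEquiv (p : Fin n × Fin r) : cIdx r n hr (colEquiv r n p) = p.2 := by
  apply Fin.ext
  simp only [cIdx, colEquiv_val]
  rw [Nat.add_mul_mod_self_left, Nat.mod_eq_of_lt p.2.isLt]

lemma div_colEquiv (hr : 0 < r) (p : Fin n × Fin r) : (colEquiv r n p).val / r = p.1.val := by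
  rw [colEquiv_val, Nat.add_mul_div_left _ _ hr, Nat.div_eq_of_lt p.2.isLt, Nat.zero_add]

lemma class_eq_image (a : Fin r) :
    (Finset.univ.filter fun i => cIdx r n hr i = a)
      = Finset.univ.image (fun k : Fin n => colEquiv r n (k, a)) := by
  ext i
  simp only [mem_filter, mem_univ, true_and, mem_image]
  constructor
  · intro h
    refine ⟨(colEquiv r n).symm i |>.1, ?_⟩
    have h2 : ((colEquiv r n).symm i).2 = a := by
      rw [← h]
      conv_rhs => rw [← (colEquiv r n).apply_symm_apply i]
      rw [cIdx_colEquiv]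
    rw [← h2]
    exact (colEquiv r n).apply_symm_apply i
  · rintro ⟨k, rfl⟩
    exact cIdx_colEquiv r n hr (k, a)

lemma card_class (a : Fin r) :
    (Finset.univ.filter fun i => cIdx r n hr i = a).card = n := by
  rw [class_eq_image r n hr a, Finset.card_image_of_injective _
    (fun k k' h => by simpa using Prod.ext_iff.mp ((colEquiv r n).injective h))]
  simp

lemma Phi_mem_parts (σ : Equiv.Perm (Fin (r * n))) : Phi r n hr σ ∈ parts r n := by
  rw [parts, mem_filter]
  refine ⟨mem_univ _, fun a => ?_, fun a b hab => ?_, ?_⟩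
  · rw [Phi, Finset.card_image_of_injective _ σ.injective, card_class]
  · rw [Finset.disjoint_left]
    rintro x hxa hxb
    simp only [Phi, mem_image, mem_filter, mem_univ, true_and] at hxa hxb
    obtain ⟨i, hi, rfl⟩ := hxa
    obtain ⟨j, hj, hji⟩ := hxb
    exact hab (by rw [← hi, ← hj, σ.injective hji])
  · refine Finset.eq_univ_iff_forall.mpr fun b => Finset.mem_biUnion.mpr ?_
    refine ⟨cIdx r n hr (σ.symm b), mem_univ _, ?_⟩
    simp only [Phi, mem_image, mem_filter, mem_univ, true_and]
    exact ⟨σ.symm b, rfl, σ.apply_symm_apply b⟩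

lemma fiber_eq (A : Fin r → Finset (Fin (r * n))) (hA : A ∈ parts r n)
    (σ : Equiv.Perm (Fin (r * n))) :
    Phi r n hr σ = A ↔ ∀ i, σ i ∈ A (cIdx r n hr i) := by
  constructor
  · intro h i
    rw [← h]
    simp only [Phi, mem_image, mem_filter, mem_univ, true_and]
    exact ⟨i, rfl, rfl⟩
  · intro h
    rw [parts, mem_filter] at hA
    funext a
    refine Finset.eq_of_subset_of_card_le ?_ ?_
    · intro b hb
      simp only [Phi, mem_image, mem_filter, mem_univ, true_and] at hb
      obtain ⟨i, hi, rfl⟩ := hb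
      rw [← hi]; exact h i
    · rw [hA.2.1 a, Phi, Finset.card_image_of_injective _ σ.injective, card_class]

end Comb

section Comb2

open Finset

variable (r n : ℕ)

lemma det_magic (hr : 0 < r) (lam : Fin (r * n) → ℝ) (X : Fin r → Fin (r * n) → ℝ) :
    (MagicM r n hr lam (Matrix.of X)).det
      = ∑ σ : Equiv.Perm (Fin (r * n)), wt r n lam σ * mon r n hr σ X := by
  rw [Matrix.det_apply']
  refine Finset.sum_congr rfl fun σ _ => ?_
  simp only [MagicM, Matrix.of_apply]
  rw [Finset.prod_mul_distrib, ← mul_assoc]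
  rfl

lemma S_eq_det (hr : 0 < r) (lam : Fin (r * n) → ℝ) (A : Fin r → Finset (Fin (r * n)))
    (hA : A ∈ parts r n) :
    ∑ σ ∈ Finset.univ.filter (fun σ => Phi r n hr σ = A), wt r n lam σ
      = (CA r n hr lam A).det := by
  rw [Matrix.det_apply', Finset.sum_filter]
  refine Finset.sum_congr rfl fun σ _ => ?_
  simp only [CA, Matrix.of_apply]
  by_cases h : ∀ i, σ i ∈ A (cIdx r n hr i)
  · rw [if_pos ((fiber_eq r n hr A hA σ).mpr h), wt]
    congr 1
    exact (Finset.prod_congr rfl fun i _ => (if_pos (h i))).symm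
  · rw [if_neg (fun hPhi => h ((fiber_eq r n hr A hA σ).mp hPhi))]
    push_neg at h
    obtain ⟨i, hi⟩ := h
    have hz : (∏ x : Fin (r * n),
        if σ x ∈ A (cIdx r n hr x) then lam (σ x) ^ (x.val / r) else 0) = 0 :=
      Finset.prod_eq_zero (Finset.mem_univ i) (if_neg hi)
    rw [hz, mul_zero]

lemma vdm_eq {N m : ℕ} (lam : Fin N → ℝ) (A : Finset (Fin N)) (h : A.card = m) :
    ∏ i : Fin m, ∏ j ∈ Finset.Ioi i, (lam (A.orderEmbOfFin h j) - lam (A.orderEmbOfFin h i))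
      = vdm lam A := by
  rw [vdm, Finset.prod_sigma']
  refine Finset.prod_bij
    (fun (q : Σ _ : Fin m, Fin m) _ => ((A.orderEmbOfFin h q.1 : Fin N), (A.orderEmbOfFin h q.2 : Fin N)))
    ?_ ?_ ?_ ?_
  · rintro ⟨i, j⟩ hq
    simp only [Finset.mem_sigma, Finset.mem_Ioi] at hq
    simp only [Finset.mem_filter, Finset.mem_product]
    exact ⟨⟨Finset.orderEmbOfFin_mem _ _ _, Finset.orderEmbOfFin_mem _ _ _⟩,
      (A.orderEmbOfFin h).strictMono hq.2⟩
  · rintro ⟨i, j⟩ h1 ⟨i', j'⟩ h2 heq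
    simp only [Prod.mk.injEq] at heq
    have e1 := (A.orderEmbOfFin h).injective heq.1
    have e2 := (A.orderEmbOfFin h).injective heq.2
    subst e1; subst e2; rfl
  · rintro ⟨x, y⟩ hxy
    simp only [Finset.mem_filter, Finset.mem_product] at hxy
    obtain ⟨⟨hx, hy⟩, hlt⟩ := hxy
    have hx' : x ∈ Set.range (A.orderEmbOfFin h) := by
      rw [Finset.range_orderEmbOfFin]; exact hx
    have hy' : y ∈ Set.range (A.orderEmbOfFin h) := by
      rw [Finset.range_orderEmbOfFin]; exact hy
    obtain ⟨i, rfl⟩ := hx'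
    obtain ⟨j, rfl⟩ := hy'
    refine ⟨⟨i, j⟩, ?_, rfl⟩
    simp only [Finset.mem_sigma, Finset.mem_univ, Finset.mem_Ioi, true_and]
    exact (A.orderEmbOfFin h).lt_iff_lt.mp hlt
  · rintro ⟨i, j⟩ hq; rfl

lemma det_CA_sq (hr : 0 < r) (lam : Fin (r * n) → ℝ) (A : Fin r → Finset (Fin (r * n)))
    (hA : A ∈ parts r n) :
    (CA r n hr lam A).det ^ 2 = ∏ a, vdm lam (A a) ^ 2 := by
  rw [parts, mem_filter] at hA
  obtain ⟨-, hcard, hdisj, -⟩ := hA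
  set f : Fin n × Fin r → Fin (r * n) := fun p => (A p.2).orderEmbOfFin (hcard p.2) p.1 with hf
  have hfmem : ∀ p, f p ∈ A p.2 := fun p => Finset.orderEmbOfFin_mem _ _ _
  have hinj : Function.Injective f := by
    rintro ⟨k, a⟩ ⟨l, b⟩ hkl
    by_cases hab : a = b
    · subst hab
      have := ((A a).orderEmbOfFin (hcard a)).injective hkl
      exact Prod.ext this rfl
    · exact absurd (hdisj a b hab) (Finset.not_disjoint_iff.mpr
        ⟨f (k, a), hfmem (k, a), hkl ▸ hfmem (l, b)⟩)
  have hbij : Function.Bijective f :=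
    (Fintype.bijective_iff_injective_and_card f).mpr ⟨hinj, by simp [Nat.mul_comm]⟩
  set e₁ : Fin n × Fin r ≃ Fin (r * n) := Equiv.ofBijective f hbij with he₁
  set e₂ := colEquiv r n with he₂
  have hsub : (CA r n hr lam A).submatrix e₁ e₂
      = Matrix.blockDiagonal (fun a : Fin r => Matrix.vandermonde (fun k : Fin n => lam (f (k, a)))) := by
    ext ⟨k, a⟩ ⟨l, b⟩
    simp only [Matrix.submatrix_apply, CA, Matrix.of_apply, Matrix.blockDiagonal_apply,
      Matrix.vandermonde, he₁, he₂, Equiv.ofBijective_apply]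
    rw [cIdx_colEquiv, div_colEquiv r n hr]
    by_cases hab : a = b
    · subst hab
      rw [if_pos (hfmem (k, a)), if_pos rfl]
    · rw [if_neg (fun hmem => (Finset.disjoint_left.mp (hdisj a b hab) (hfmem (k, a)) hmem)),
        if_neg hab]
  have habs := Matrix.abs_det_submatrix_equiv_equiv e₁ e₂ (CA r n hr lam A)
  have hsq : (CA r n hr lam A).det ^ 2 = ((CA r n hr lam A).submatrix e₁ e₂).det ^ 2 := by
    rw [← sq_abs, ← sq_abs (((CA r n hr lam A).submatrix e₁ e₂).det), habs]
  rw [hsq, hsub, Matrix.det_blockDiagonal, ← Finset.prod_pow]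
  refine Finset.prod_congr rfl fun a _ => ?_
  congr 1
  rw [Matrix.det_vandermonde]
  exact vdm_eq lam (A a) (hcard a)

lemma regroup (hr : 0 < r) (lam : Fin (r * n) → ℝ) :
    (∑ σ : Equiv.Perm (Fin (r * n)), ∑ τ : Equiv.Perm (Fin (r * n)),
        (wt r n lam σ * wt r n lam τ) * (if Phi r n hr σ = Phi r n hr τ then (1:ℝ) else 0))
      = ∑ A ∈ parts r n,
          (∑ σ ∈ Finset.univ.filter fun σ => Phi r n hr σ = A, wt r n lam σ) ^ 2 := by
  have hinner : ∀ σ : Equiv.Perm (Fin (r * n)),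
      (∑ τ : Equiv.Perm (Fin (r * n)),
        (wt r n lam σ * wt r n lam τ) * (if Phi r n hr σ = Phi r n hr τ then (1:ℝ) else 0))
      = wt r n lam σ *
          ∑ τ ∈ Finset.univ.filter fun τ => Phi r n hr τ = Phi r n hr σ, wt r n lam τ := by
    intro σ
    rw [Finset.mul_sum, Finset.sum_filter]
    refine Finset.sum_congr rfl fun τ _ => ?_
    by_cases h : Phi r n hr τ = Phi r n hr σ
    · rw [if_pos h, if_pos h.symm, mul_one]
    · rw [if_neg h, if_neg (fun hh => h hh.symm), mul_zero]
  simp_rw [hinner]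
  rw [← Finset.sum_fiberwise_of_maps_to (fun σ _ => Phi_mem_parts r n hr σ)
    (fun σ => wt r n lam σ *
      ∑ τ ∈ Finset.univ.filter fun τ => Phi r n hr τ = Phi r n hr σ, wt r n lam τ)]
  refine Finset.sum_congr rfl fun A hA => ?_
  have hc : ∀ σ ∈ Finset.univ.filter (fun σ => Phi r n hr σ = A),
      wt r n lam σ *
          (∑ τ ∈ Finset.univ.filter fun τ => Phi r n hr τ = Phi r n hr σ, wt r n lam τ)
        = wt r n lam σ *
          ∑ τ ∈ Finset.univ.filter fun τ => Phi r n hr τ = A, wt r n lam τ := by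
    intro σ hσ
    rw [(Finset.mem_filter.mp hσ).2]
  rw [Finset.sum_congr rfl hc, ← Finset.sum_mul, sq]

end Comb2

section MonInt

open Finset

variable (r n : ℕ)

lemma mon_grouped (hr : 0 < r) (σ : Equiv.Perm (Fin (r * n))) (X : Fin r → Fin (r * n) → ℝ) :
    mon r n hr σ X = ∏ a : Fin r, ∏ b ∈ Phi r n hr σ a, X a b := by
  rw [mon, ← Finset.prod_fiberwise_of_maps_to (fun i _ => Finset.mem_univ (cIdx r n hr i))
    (fun i => X (cIdx r n hr i) (σ i))]
  refine Finset.prod_congr rfl fun a _ => ?_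
  rw [Phi, Finset.prod_image (fun i _ j _ h => σ.injective h)]
  refine Finset.prod_congr rfl fun i hi => ?_
  rw [(Finset.mem_filter.mp hi).2]

lemma prod_pow_ind {N : ℕ} (S : Finset (Fin N)) (x : Fin N → ℝ) :
    ∏ b : Fin N, x b ^ (if b ∈ S then 1 else 0) = ∏ b ∈ S, x b := by
  have h : ∀ b, x b ^ (if b ∈ S then 1 else 0) = if b ∈ S then x b else 1 := by
    intro b; by_cases hb : b ∈ S <;> simp [hb]
  simp_rw [h]
  rw [Finset.prod_ite_mem, Finset.univ_inter]

lemma mon_mul_eq (hr : 0 < r) (σ τ : Equiv.Perm (Fin (r * n))) (X : Fin r → Fin (r * n) → ℝ) :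
    mon r n hr σ X * mon r n hr τ X
      = ∏ a : Fin r, ∏ b : Fin (r * n),
          (X a b) ^ ((if b ∈ Phi r n hr σ a then 1 else 0)
            + (if b ∈ Phi r n hr τ a then 1 else 0)) := by
  rw [mon_grouped, mon_grouped, ← Finset.prod_mul_distrib]
  refine Finset.prod_congr rfl fun a _ => ?_
  rw [← prod_pow_ind (Phi r n hr σ a) (X a), ← prod_pow_ind (Phi r n hr τ a) (X a),
    ← Finset.prod_mul_distrib]
  exact Finset.prod_congr rfl fun b _ => (pow_add _ _ _).symm

lemma integral_mon_mul (hr : 0 < r) (σ τ : Equiv.Perm (Fin (r * n))) :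
    ∫ X : Fin r → Fin (r * n) → ℝ, mon r n hr σ X * mon r n hr τ X
        ∂(Measure.pi fun _ : Fin r => Measure.pi fun _ : Fin (r * n) => gaussianReal 0 1)
      = if Phi r n hr σ = Phi r n hr τ then 1 else 0 := by
  simp_rw [mon_mul_eq r n hr σ τ]
  rw [my_integral_pi (Measure.pi fun _ : Fin (r * n) => gaussianReal 0 1)
    (fun a x => ∏ b : Fin (r * n), (x b) ^ ((if b ∈ Phi r n hr σ a then 1 else 0)
      + (if b ∈ Phi r n hr τ a then 1 else 0)))]
  have hstep : ∀ a : Fin r,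
      (∫ x : Fin (r * n) → ℝ, ∏ b : Fin (r * n), (x b) ^ ((if b ∈ Phi r n hr σ a then 1 else 0)
          + (if b ∈ Phi r n hr τ a then 1 else 0))
        ∂(Measure.pi fun _ : Fin (r * n) => gaussianReal 0 1))
      = if Phi r n hr σ a = Phi r n hr τ a then (1:ℝ) else 0 := by
    intro a
    rw [my_integral_pi (gaussianReal 0 1)
      (fun b t => t ^ ((if b ∈ Phi r n hr σ a then 1 else 0)
        + (if b ∈ Phi r n hr τ a then 1 else 0)))]
    simp_rw [gauss_moment_ind]
    by_cases h : Phi r n hr σ a = Phi r n hr τ a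
    · rw [if_pos h]
      exact Finset.prod_eq_one fun b _ => if_pos (by rw [h])
    · rw [if_neg h]
      have hw : ∃ b, ¬ (b ∈ Phi r n hr σ a ↔ b ∈ Phi r n hr τ a) := by
        by_contra hb
        push_neg at hb
        exact h (Finset.ext fun b => hb b)
      obtain ⟨b, hb⟩ := hw
      exact Finset.prod_eq_zero (Finset.mem_univ b) (if_neg hb)
  simp_rw [hstep]
  by_cases h : Phi r n hr σ = Phi r n hr τ
  · rw [if_pos h]
    exact Finset.prod_eq_one fun a _ => if_pos (congrFun h a)
  · rw [if_neg h]
    obtain ⟨a, ha⟩ := Function.ne_iff.mp h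
    exact Finset.prod_eq_zero (Finset.mem_univ a) (if_neg ha)

lemma integrable_mon_mul (hr : 0 < r) (σ τ : Equiv.Perm (Fin (r * n))) :
    Integrable (fun X : Fin r → Fin (r * n) → ℝ => mon r n hr σ X * mon r n hr τ X)
      (Measure.pi fun _ : Fin r => Measure.pi fun _ : Fin (r * n) => gaussianReal 0 1) := by
  have heq : (fun X : Fin r → Fin (r * n) → ℝ => mon r n hr σ X * mon r n hr τ X)
      = fun X => ∏ a : Fin r, ∏ b : Fin (r * n),
          (X a b) ^ ((if b ∈ Phi r n hr σ a then 1 else 0)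
            + (if b ∈ Phi r n hr τ a then 1 else 0)) :=
    funext (mon_mul_eq r n hr σ τ)
  rw [heq]
  exact my_integrable_pi (Measure.pi fun _ : Fin (r * n) => gaussianReal 0 1)
    (fun a x => ∏ b : Fin (r * n), (x b) ^ ((if b ∈ Phi r n hr σ a then 1 else 0)
      + (if b ∈ Phi r n hr τ a then 1 else 0)))
    (fun a => my_integrable_pi (gaussianReal 0 1)
      (fun b t => t ^ ((if b ∈ Phi r n hr σ a then 1 else 0)
        + (if b ∈ Phi r n hr τ a then 1 else 0)))
      (fun b => gauss_integrable_npow _))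

end MonInt

/-- The entries of `X` are i.i.d. standard real Gaussians, i.e. `X` is distributed
according to the product over all entries of `N(0,1)`. -/
theorem statement2 (r n : ℕ) (hr : 0 < r) (hn : 0 < n) (lam : Fin (r * n) → ℝ) :
    (∫ X : Fin r → Fin (r * n) → ℝ,
        ((MagicM r n hr lam (Matrix.of X)).det) ^ 2
        ∂(Measure.pi fun _ : Fin r => Measure.pi fun _ : Fin (r * n) =>
            gaussianReal 0 1)) =
      ∑ A ∈ parts r n, ∏ j : Fin r, vdm lam (A j) ^ 2 := by
  set μ : Measure (Fin r → Fin (r * n) → ℝ) :=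
    Measure.pi fun _ : Fin r => Measure.pi fun _ : Fin (r * n) => gaussianReal 0 1 with hμ
  have hexp : ∀ X : Fin r → Fin (r * n) → ℝ, ((MagicM r n hr lam (Matrix.of X)).det) ^ 2
      = ∑ σ : Equiv.Perm (Fin (r * n)), ∑ τ : Equiv.Perm (Fin (r * n)),
          (wt r n lam σ * wt r n lam τ) * (mon r n hr σ X * mon r n hr τ X) := by
    intro X
    rw [det_magic, sq, Finset.sum_mul_sum]
    exact Finset.sum_congr rfl fun σ _ => Finset.sum_congr rfl fun τ _ => by ring
  simp_rw [hexp]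
  rw [integral_finset_sum _ (fun σ _ => integrable_finset_sum _
    (fun τ _ => ((integrable_mon_mul r n hr σ τ).const_mul _)))]
  have hswap : ∀ σ : Equiv.Perm (Fin (r * n)),
      (∫ X, ∑ τ : Equiv.Perm (Fin (r * n)),
          (wt r n lam σ * wt r n lam τ) * (mon r n hr σ X * mon r n hr τ X) ∂μ)
      = ∑ τ : Equiv.Perm (Fin (r * n)),
          (wt r n lam σ * wt r n lam τ) * (if Phi r n hr σ = Phi r n hr τ then (1:ℝ) else 0) := by
    intro σ
    rw [integral_finset_sum _ (fun τ _ => ((integrable_mon_mul r n hr σ τ).const_mul _))]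
    refine Finset.sum_congr rfl fun τ _ => ?_
    rw [integral_const_mul, integral_mon_mul]
  rw [← hμ]
  simp_rw [hswap]
  rw [regroup r n hr lam]
  refine Finset.sum_congr rfl fun A hA => ?_
  rw [S_eq_det r n hr lam A hA, det_CA_sq r n hr lam A hA]
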